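/- For every d×d complex density matrix ρ in odd dimension d ≥ 3 with S_R < 1/√(d−1), the quadratic bound is strict: S_I² < 1 + S_R². (Hence the bound S_I² ≤ 1 + S_R² cannot be saturated in odd dimensions when S_R < 1/√(d−1).) -/

import Mathlib

open Matrix
open scoped ComplexOrder

noncomputable section

/-- A density matrix: positive semidefinite with unit trace. -/
def IsDensityMatrix {d : ℕ} (ρ : Matrix (Fin d) (Fin d) ℂ) : Prop :=
  ρ.PosSemidef ∧ ρ.trace = 1

/-- The real part `R = (d/2)(ρ + ρᵀ)`. -/
def Rpart (d : ℕ) (ρ : Matrix (Fin d) (Fin d) ℂ) : Matrix (Fin d) (Fin d) ℂ :=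
  ((d : ℂ) / 2) • (ρ + ρ.transpose)

/-- The imaginary part `I = (d/2)(ρ − ρᵀ)`. -/
def Ipart (d : ℕ) (ρ : Matrix (Fin d) (Fin d) ℂ) : Matrix (Fin d) (Fin d) ℂ :=
  ((d : ℂ) / 2) • (ρ - ρ.transpose)

/-- `S_R = √(Tr(R²)/d − 1)`. -/
def SR (d : ℕ) (ρ : Matrix (Fin d) (Fin d) ℂ) : ℝ :=
  Real.sqrt ((Rpart d ρ * Rpart d ρ).trace.re / d - 1)

/-- `S_I = √(Tr(I²)/d)`. -/
def SI (d : ℕ) (ρ : Matrix (Fin d) (Fin d) ℂ) : ℝ :=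
  Real.sqrt ((Ipart d ρ * Ipart d ρ).trace.re / d)

namespace QBSO

variable {n : Type*} [Fintype n] [DecidableEq n]

lemma trace_conjTranspose_mul_self_re (M : Matrix n n ℂ) :
    (Mᴴ * M).trace.re = ∑ j, ∑ i, Complex.normSq (M i j) := by
  simp only [Matrix.trace, Matrix.diag, Matrix.mul_apply, Matrix.conjTranspose_apply,
    Complex.re_sum]
  refine Finset.sum_congr rfl fun j _ => Finset.sum_congr rfl fun i _ => ?_
  simp [Complex.mul_re, Complex.normSq_apply]

lemma trace_conjTranspose_mul_self_re_nonneg (M : Matrix n n ℂ) :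
    0 ≤ (Mᴴ * M).trace.re := by
  rw [trace_conjTranspose_mul_self_re]
  exact Finset.sum_nonneg fun j _ => Finset.sum_nonneg fun i _ => Complex.normSq_nonneg _

lemma eq_zero_of_trace_conjTranspose_mul_self_re (M : Matrix n n ℂ)
    (h : (Mᴴ * M).trace.re = 0) : M = 0 := by
  rw [trace_conjTranspose_mul_self_re] at h
  ext i j
  have h1 : ∀ j ∈ (Finset.univ : Finset n), 0 ≤ ∑ i, Complex.normSq (M i j) :=
    fun j _ => Finset.sum_nonneg fun i _ => Complex.normSq_nonneg _
  have h2 := (Finset.sum_eq_zero_iff_of_nonneg h1).1 h j (Finset.mem_univ j)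
  have h3 : ∀ i ∈ (Finset.univ : Finset n), 0 ≤ Complex.normSq (M i j) :=
    fun i _ => Complex.normSq_nonneg _
  have h4 := (Finset.sum_eq_zero_iff_of_nonneg h3).1 h2 i (Finset.mem_univ i)
  simpa using Complex.normSq_eq_zero.1 h4

open scoped MatrixOrder in
lemma trace_mul_psd_re_nonneg {A B : Matrix n n ℂ} (hA : A.PosSemidef) (hB : B.PosSemidef) :
    0 ≤ (A * B).trace.re ∧ ((A * B).trace.re = 0 → A * B = 0) := by
  set s := CFC.sqrt A with hs
  set b := CFC.sqrt B with hb
  have hsH : sᴴ = s := (CFC.sqrt_nonneg A).posSemidef.isHermitian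
  have hbH : bᴴ = b := (CFC.sqrt_nonneg B).posSemidef.isHermitian
  set N := s * b with hN
  have hNH : Nᴴ = b * s := by rw [hN, Matrix.conjTranspose_mul, hsH, hbH]
  have key : (A * B).trace = (Nᴴᴴ * Nᴴ).trace := by
    rw [Matrix.conjTranspose_conjTranspose, hNH, hN]
    calc (A * B).trace = (s * s * (b * b)).trace := by
          rw [CFC.sqrt_mul_sqrt_self A hA.nonneg, CFC.sqrt_mul_sqrt_self B hB.nonneg]
      _ = (s * (s * (b * b))).trace := by rw [Matrix.mul_assoc]
      _ = (s * (b * b) * s).trace := Matrix.trace_mul_comm s (s * (b * b))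
      _ = (s * b * (b * s)).trace := by
          rw [← Matrix.mul_assoc s b b, Matrix.mul_assoc (s * b) b s]
  constructor
  · rw [key, trace_conjTranspose_mul_self_re]
    exact Finset.sum_nonneg fun j _ => Finset.sum_nonneg fun i _ => Complex.normSq_nonneg _
  · intro h
    rw [key] at h
    have hN0 : Nᴴ = 0 := eq_zero_of_trace_conjTranspose_mul_self_re _ h
    have hN0' : N = 0 := by
      have := congrArg Matrix.conjTranspose hN0
      simpa using this
    have hAB : A * B = s * (N * b) := by
      rw [hN, ← CFC.sqrt_mul_sqrt_self A hA.nonneg, ← CFC.sqrt_mul_sqrt_self B hB.nonneg]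
      simp only [← hs, ← hb, Matrix.mul_assoc]
    rw [hAB, hN0', Matrix.zero_mul, Matrix.mul_zero]

lemma trace_eq_sum_eigenvalues {A : Matrix n n ℂ} (hA : A.IsHermitian) :
    A.trace = ∑ i, (hA.eigenvalues i : ℂ) := by
  set U : Matrix n n ℂ := (hA.eigenvectorUnitary : Matrix n n ℂ) with hU
  have hUU : star U * U = 1 := Matrix.mem_unitaryGroup_iff'.1 hA.eigenvectorUnitary.2
  conv_lhs => rw [hA.spectral_theorem, Unitary.conjStarAlgAut_apply]
  rw [Matrix.trace_mul_cycle, hUU, Matrix.one_mul, Matrix.trace_diagonal]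
  rfl

lemma trace_sq_eq_sum_eigenvalues_sq {A : Matrix n n ℂ} (hA : A.IsHermitian) :
    (A * A).trace = ∑ i, ((hA.eigenvalues i : ℂ)) ^ 2 := by
  set U : Matrix n n ℂ := (hA.eigenvectorUnitary : Matrix n n ℂ) with hU
  set D : Matrix n n ℂ := Matrix.diagonal (RCLike.ofReal ∘ hA.eigenvalues) with hD
  have hUU : star U * U = 1 := Matrix.mem_unitaryGroup_iff'.1 hA.eigenvectorUnitary.2
  have hAeq : A = U * D * star U := by
    conv_lhs => rw [hA.spectral_theorem, Unitary.conjStarAlgAut_apply]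
  have : A * A = U * (D * D) * star U := by
    rw [hAeq]
    calc U * D * star U * (U * D * star U) = U * D * (star U * U) * D * star U := by
          simp only [Matrix.mul_assoc]
      _ = U * (D * D) * star U := by rw [hUU]; simp only [Matrix.mul_one, Matrix.mul_assoc]
  rw [this, Matrix.trace_mul_cycle, hUU, Matrix.one_mul, hD,
    Matrix.diagonal_mul_diagonal, Matrix.trace_diagonal]
  refine Finset.sum_congr rfl fun i _ => ?_
  simp [sq]

lemma one_le_rank_mul_trace_sq {A : Matrix n n ℂ} (hA : A.PosSemidef) (h1 : A.trace = 1) :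
    1 ≤ (A.rank : ℝ) * (A * A).trace.re := by
  classical
  set lam := hA.isHermitian.eigenvalues with hlam
  have hsum : ∑ i, lam i = 1 := by
    have := trace_eq_sum_eigenvalues hA.isHermitian
    rw [h1] at this
    have := congrArg Complex.re this.symm
    simpa [Complex.re_sum] using this
  have hsq : (A * A).trace.re = ∑ i, lam i ^ 2 := by
    have := trace_sq_eq_sum_eigenvalues_sq hA.isHermitian
    have := congrArg Complex.re this
    simpa [Complex.re_sum, ← Complex.ofReal_pow] using this
  set s : Finset n := Finset.univ.filter (fun i => lam i ≠ 0) with hsdef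
  have hcard : A.rank = s.card := by
    rw [hA.isHermitian.rank_eq_card_non_zero_eigs, Fintype.card_subtype]
  have hsum' : ∑ i ∈ s, lam i = 1 := by
    rw [← hsum]
    exact Finset.sum_filter_ne_zero _
  have hCS : (∑ i ∈ s, lam i) ^ 2 ≤ (s.card : ℝ) * ∑ i ∈ s, lam i ^ 2 :=
    sq_sum_le_card_mul_sum_sq
  have hle : ∑ i ∈ s, lam i ^ 2 ≤ ∑ i, lam i ^ 2 := by
    apply Finset.sum_le_sum_of_subset_of_nonneg (Finset.filter_subset _ _)
    intro i _ _; positivity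
  calc (1 : ℝ) = (∑ i ∈ s, lam i) ^ 2 := by rw [hsum']; norm_num
    _ ≤ (s.card : ℝ) * ∑ i ∈ s, lam i ^ 2 := hCS
    _ ≤ (s.card : ℝ) * ∑ i, lam i ^ 2 := by
        apply mul_le_mul_of_nonneg_left hle; positivity
    _ = (A.rank : ℝ) * (A * A).trace.re := by rw [hcard, hsq]

end QBSO

/-- For every `d×d` density matrix in odd dimension `d ≥ 3` with
`S_R < 1/√(d−1)`, the quadratic bound is strict: `S_I² < 1 + S_R²`. -/
theorem quadratic_bound_strict_odd (d : ℕ) (hd : 3 ≤ d) (hdodd : Odd d)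
    (ρ : Matrix (Fin d) (Fin d) ℂ) (hρ : IsDensityMatrix ρ)
    (hSR : SR d ρ < 1 / Real.sqrt ((d : ℝ) - 1)) :
    SI d ρ ^ 2 < 1 + SR d ρ ^ 2 := by
  classical
  obtain ⟨hpsd, htr1⟩ := hρ
  have hH : ρ.IsHermitian := hpsd.isHermitian
  have hTpsd : ρᵀ.PosSemidef := hpsd.transpose
  have hd0 : (0 : ℝ) < d := by positivity
  have hd3 : (3 : ℝ) ≤ (d : ℝ) := by exact_mod_cast hd
  set T : ℂ := (ρ * ρ).trace with hT
  set X : ℂ := (ρ * ρᵀ).trace with hX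
  set t2 : ℝ := T.re with ht2
  set x : ℝ := X.re with hx
  -- trace identities
  have hTT : ρᵀ * ρᵀ = (ρ * ρ)ᵀ := (Matrix.transpose_mul ρ ρ).symm
  have hRtr : (Rpart d ρ * Rpart d ρ).trace = (((d : ℝ) ^ 2 / 4 : ℝ) : ℂ) * (2 * T + 2 * X) := by
    have hexp : Rpart d ρ * Rpart d ρ
        = ((d : ℂ) / 2 * ((d : ℂ) / 2)) • (ρ * ρ + ρ * ρᵀ + ρᵀ * ρ + ρᵀ * ρᵀ) := by
      rw [Rpart, Matrix.smul_mul, Matrix.mul_smul, smul_smul]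
      congr 1
      rw [Matrix.add_mul, Matrix.mul_add, Matrix.mul_add]
      abel
    rw [hexp]
    rw [Matrix.trace_smul]
    simp only [Matrix.trace_add, hTT, Matrix.trace_transpose,
      Matrix.trace_mul_comm ρᵀ ρ, ← hT, ← hX]
    rw [smul_eq_mul]
    push_cast
    ring
  have hItr : (Ipart d ρ * Ipart d ρ).trace = (((d : ℝ) ^ 2 / 4 : ℝ) : ℂ) * (2 * T - 2 * X) := by
    have hexp : Ipart d ρ * Ipart d ρ
        = ((d : ℂ) / 2 * ((d : ℂ) / 2)) • (ρ * ρ - ρ * ρᵀ - ρᵀ * ρ + ρᵀ * ρᵀ) := by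
      rw [Ipart, Matrix.smul_mul, Matrix.mul_smul, smul_smul]
      congr 1
      rw [Matrix.sub_mul, Matrix.mul_sub, Matrix.mul_sub]
      abel
    rw [hexp, Matrix.trace_smul]
    simp only [Matrix.trace_sub, Matrix.trace_add, hTT, Matrix.trace_transpose,
      Matrix.trace_mul_comm ρᵀ ρ, ← hT, ← hX]
    rw [smul_eq_mul]
    push_cast
    ring
  have hRre : (Rpart d ρ * Rpart d ρ).trace.re / d - 1 = (d : ℝ) / 2 * (t2 + x) - 1 := by
    rw [hRtr, Complex.re_ofReal_mul]
    have : (2 * T + 2 * X).re = 2 * t2 + 2 * x := by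
      simp [Complex.add_re, Complex.mul_re, ht2, hx]
    rw [this]
    field_simp
    ring
  have hIre : (Ipart d ρ * Ipart d ρ).trace.re / d = (d : ℝ) / 2 * (t2 - x) := by
    rw [hItr, Complex.re_ofReal_mul]
    have : (2 * T - 2 * X).re = 2 * t2 - 2 * x := by
      simp [Complex.sub_re, Complex.mul_re, ht2, hx]
    rw [this]
    field_simp
    ring
  -- x ≥ 0 and pure-imaginary-trace positivity
  have hxfacts := QBSO.trace_mul_psd_re_nonneg hpsd hTpsd
  have hx0 : 0 ≤ x := hxfacts.1
  -- a_I ≥ 0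
  have hIH : (Ipart d ρ)ᴴ = Ipart d ρ := by
    have hTH : (ρᵀ)ᴴ = ρᵀ := hH.transpose.eq
    rw [Ipart, Matrix.conjTranspose_smul, Matrix.conjTranspose_sub, hH.eq, hTH]
    congr 1
    simp
  have haI0 : 0 ≤ (d : ℝ) / 2 * (t2 - x) := by
    rw [← hIre]
    apply div_nonneg _ (le_of_lt hd0)
    have h := QBSO.trace_conjTranspose_mul_self_re_nonneg (Ipart d ρ)
    rwa [hIH] at h
  have hSI2 : SI d ρ ^ 2 = (d : ℝ) / 2 * (t2 - x) := by
    simp only [SI]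
    rw [Real.sq_sqrt (by rw [hIre]; exact haI0), hIre]
  set aR : ℝ := (d : ℝ) / 2 * (t2 + x) - 1 with haRdef
  have hSRa : SR d ρ = Real.sqrt aR := by simp only [SR]; rw [hRre]
  by_cases hcase : 0 ≤ aR
  · have hSR2 : SR d ρ ^ 2 = aR := by rw [hSRa, Real.sq_sqrt hcase]
    have haRlt : aR < 1 / ((d : ℝ) - 1) := by
      have h1 : (1 : ℝ) / Real.sqrt ((d : ℝ) - 1) = Real.sqrt (1 / ((d : ℝ) - 1)) := by
        rw [one_div, one_div, Real.sqrt_inv]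
      have h2 := hSR
      rw [hSRa, h1] at h2
      exact (Real.sqrt_lt_sqrt_iff hcase).1 h2
    have hxpos : 0 < x := by
      rcases lt_or_eq_of_le hx0 with h | h
      · exact h
      · exfalso
        have hzero : ρ * ρᵀ = 0 := by
          apply hxfacts.2
          rw [← hX, ← hx, ← h]
        have hrk : ρ.rank + ρᵀ.rank ≤ d := by
          have := Matrix.rank_add_rank_le_card_of_mul_eq_zero hzero
          simpa using this
        rw [Matrix.rank_transpose] at hrk
        have hodd : d % 2 = 1 := Nat.odd_iff.mp hdodd
        have hrk3 : 2 * ρ.rank ≤ d - 1 := by omega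
        have hrle : (ρ.rank : ℝ) ≤ ((d : ℝ) - 1) / 2 := by
          have hc := (Nat.cast_le (α := ℝ)).mpr hrk3
          rw [Nat.cast_sub (by omega : 1 ≤ d)] at hc
          push_cast at hc
          linarith
        have hCS := QBSO.one_le_rank_mul_trace_sq hpsd htr1
        have hCS' : 1 ≤ (ρ.rank : ℝ) * t2 := by rw [ht2, hT]; exact hCS
        have ht2pos : 0 < t2 := by
          by_contra hle
          push_neg at hle
          have : (ρ.rank : ℝ) * t2 ≤ 0 :=
            mul_nonpos_of_nonneg_of_nonpos (Nat.cast_nonneg _) hle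
          linarith
        have hd1 : (0 : ℝ) < (d : ℝ) - 1 := by linarith
        have hfinal : 2 / ((d : ℝ) - 1) ≤ t2 := by
          have h1 : 1 ≤ ((d : ℝ) - 1) / 2 * t2 :=
            le_trans hCS' (mul_le_mul_of_nonneg_right hrle ht2pos.le)
          rw [div_le_iff₀ hd1]
          linarith
        have hstep : (d : ℝ) / ((d : ℝ) - 1) ≤ (d : ℝ) / 2 * t2 := by
          have h3 := mul_le_mul_of_nonneg_left hfinal (by positivity : (0 : ℝ) ≤ (d : ℝ) / 2)
          calc (d : ℝ) / ((d : ℝ) - 1) = (d : ℝ) / 2 * (2 / ((d : ℝ) - 1)) := by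
                field_simp
            _ ≤ (d : ℝ) / 2 * t2 := h3
        have hcontr : 1 / ((d : ℝ) - 1) ≤ aR := by
          rw [haRdef, h.symm]
          have h4 : (d : ℝ) / ((d : ℝ) - 1) = 1 + 1 / ((d : ℝ) - 1) := by
            field_simp
            ring
          have h5 : (d : ℝ) / 2 * (t2 + 0) = (d : ℝ) / 2 * t2 := by ring
          rw [h5]
          linarith
        linarith
    rw [hSI2, hSR2, haRdef]
    nlinarith [hxpos, hd0]
  · have hSR0 : SR d ρ = 0 := by rw [hSRa]; exact Real.sqrt_eq_zero'.2 (le_of_not_ge hcase)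
    rw [hSI2, hSR0]
    push_neg at hcase
    rw [haRdef] at hcase
    nlinarith [hx0, hd0]

end
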